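/- Let {σ_n} be a tight sequence of finite positive Borel measures on ℝ² with uniformly bounded total masses, and let {γ_n} be a bounded sequence of real numbers. Then lim_{y→0⁺} sup_{n≥1} | i γ_n y + ∫_{ℝ²} ((−iy)² − iys)/(1 + iys) dσ_n(s,t) | = 0. -/

import Mathlib

open MeasureTheory Complex

lemma den_norm_ge_one (y s : ℝ) : (1:ℝ) ≤ ‖1 + I * (y:ℂ) * (s:ℂ)‖ := by
  have h : (1 + I * (y:ℂ) * (s:ℂ)).re = 1 := by simp
  calc (1:ℝ) = |(1 + I * (y:ℂ) * (s:ℂ)).re| := by rw [h]; simp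
    _ ≤ ‖1 + I * (y:ℂ) * (s:ℂ)‖ := Complex.abs_re_le_norm _

lemma den_norm_ge (y s : ℝ) (hy : 0 ≤ y) : y * |s| ≤ ‖1 + I * (y:ℂ) * (s:ℂ)‖ := by
  have h : (1 + I * (y:ℂ) * (s:ℂ)).im = y * s := by simp
  calc y * |s| = |y * s| := by rw [abs_mul, _root_.abs_of_nonneg hy]
    _ = |(1 + I * (y:ℂ) * (s:ℂ)).im| := by rw [h]
    _ ≤ ‖1 + I * (y:ℂ) * (s:ℂ)‖ := Complex.abs_im_le_norm _

theorem uniform_smallness_near_zero (σs : ℕ → Measure (ℝ × ℝ))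
    (hfin : ∀ n, IsFiniteMeasure (σs n))
    (hmass : ∃ M : ℝ, ∀ n, ((σs n) Set.univ).toReal ≤ M)
    (htight : ∀ ε : ℝ, 0 < ε → ∃ m : ℝ, 0 < m ∧ ∀ n,
      ((σs n) {p : ℝ × ℝ | ¬(|p.1| ≤ m ∧ |p.2| ≤ m)}).toReal < ε)
    (γ : ℕ → ℝ) (hγ : ∃ C : ℝ, ∀ n, |γ n| ≤ C) :
    ∀ ε : ℝ, 0 < ε → ∃ δ : ℝ, 0 < δ ∧ ∀ y : ℝ, 0 < y → y < δ → ∀ n : ℕ,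
      ‖I * (γ n : ℂ) * (y : ℂ) +
          ∫ p : ℝ × ℝ,
            ((-I * (y : ℂ)) ^ 2 - I * (y : ℂ) * (p.1 : ℂ)) / (1 + I * (y : ℂ) * (p.1 : ℂ))
            ∂(σs n)‖ < ε := by
  intro ε hε
  obtain ⟨M, hM⟩ := hmass
  obtain ⟨C, hC⟩ := hγ
  obtain ⟨m, hm, htail⟩ := htight (ε/6) (by positivity)
  have hC0 : 0 ≤ C := le_trans (abs_nonneg _) (hC 0)
  have hM0 : 0 ≤ M := le_trans ENNReal.toReal_nonneg (hM 0)
  refine ⟨min 1 (min (ε / (3 * (C + 1))) (ε / (3 * (1 + m) * (M + 1)))), by positivity, ?_⟩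
  intro y hy hyδ n
  have hy1 : y ≤ 1 := le_of_lt (lt_of_lt_of_le hyδ (min_le_left _ _))
  have hy2 : y < ε / (3 * (C + 1)) :=
    lt_of_lt_of_le hyδ (le_trans (min_le_right _ _) (min_le_left _ _))
  have hy3 : y < ε / (3 * (1 + m) * (M + 1)) :=
    lt_of_lt_of_le hyδ (le_trans (min_le_right _ _) (min_le_right _ _))
  set T : Set (ℝ × ℝ) := {p : ℝ × ℝ | ¬(|p.1| ≤ m ∧ |p.2| ≤ m)} with hTdef
  have hT : MeasurableSet T := by
    have : T = ({p : ℝ × ℝ | |p.1| ≤ m} ∩ {p : ℝ × ℝ | |p.2| ≤ m})ᶜ := by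
      ext p; simp [hTdef, Set.mem_setOf_eq, not_and_or]
    rw [this]
    exact ((measurableSet_le (measurable_fst.abs) measurable_const).inter
      (measurableSet_le (measurable_snd.abs) measurable_const)).compl
  set f : ℝ × ℝ → ℂ := fun p =>
    ((-I * (y : ℂ)) ^ 2 - I * (y : ℂ) * (p.1 : ℂ)) / (1 + I * (y : ℂ) * (p.1 : ℂ)) with hfdef
  set g : ℝ × ℝ → ℝ := fun p => y * (1 + m) + T.indicator (fun _ => (2:ℝ)) p with hgdef
  haveI := hfin n
  have hg_int : Integrable g (σs n) :=
    (integrable_const _).add ((integrable_const (2:ℝ)).indicator hT)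
  have hfg : ∀ p : ℝ × ℝ, ‖f p‖ ≤ g p := by
    intro p
    have hden1 := den_norm_ge_one y p.1
    have hden2 := den_norm_ge y p.1 (le_of_lt hy)
    have hdpos : (0:ℝ) < ‖1 + I * (y:ℂ) * ((p.1:ℝ):ℂ)‖ := lt_of_lt_of_le one_pos hden1
    have hnum : ‖(-I * (y : ℂ)) ^ 2 - I * (y : ℂ) * (p.1 : ℂ)‖ ≤ y^2 + y * |p.1| := by
      calc ‖(-I * (y : ℂ)) ^ 2 - I * (y : ℂ) * (p.1 : ℂ)‖
          ≤ ‖(-I * (y : ℂ)) ^ 2‖ + ‖I * (y : ℂ) * (p.1 : ℂ)‖ := norm_sub_le _ _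
        _ = y^2 + y * |p.1| := by
            simp [norm_mul, norm_pow, Complex.norm_real, Real.norm_eq_abs,
              _root_.abs_of_nonneg (le_of_lt hy), _root_.sq_abs]
    by_cases hp : p ∈ T
    · -- tail: global bound 2
      have h2 : ‖f p‖ ≤ 2 := by
        rw [hfdef]
        simp only [norm_div]
        rw [div_le_iff₀ hdpos]
        calc ‖(-I * (y : ℂ)) ^ 2 - I * (y : ℂ) * (p.1 : ℂ)‖
            ≤ y^2 + y * |p.1| := hnum
          _ ≤ 1 * ‖1 + I * (y:ℂ) * ((p.1:ℝ):ℂ)‖ + ‖1 + I * (y:ℂ) * ((p.1:ℝ):ℂ)‖ := by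
              apply add_le_add
              · have : y^2 ≤ 1 := by nlinarith
                nlinarith
              · exact hden2
          _ = 2 * ‖1 + I * (y:ℂ) * ((p.1:ℝ):ℂ)‖ := by ring
      have : g p = y * (1 + m) + 2 := by
        rw [hgdef]; simp [Set.indicator_of_mem hp]
      rw [this]
      nlinarith
    · -- core: |p.1| ≤ m
      have hpm : |p.1| ≤ m := by
        by_contra h
        exact hp (by simp [hTdef, Set.mem_setOf_eq]; intro h'; exact absurd h' h)
      have h1 : ‖f p‖ ≤ y * (1 + m) := by
        rw [hfdef]
        simp only [norm_div]
        rw [div_le_iff₀ hdpos]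
        calc ‖(-I * (y : ℂ)) ^ 2 - I * (y : ℂ) * (p.1 : ℂ)‖
            ≤ y^2 + y * |p.1| := hnum
          _ ≤ y * (1 + m) := by nlinarith
          _ ≤ y * (1 + m) * ‖1 + I * (y:ℂ) * ((p.1:ℝ):ℂ)‖ := by
              nlinarith [mul_nonneg (le_of_lt hy) (by nlinarith : (0:ℝ) ≤ 1 + m)]
      have : g p = y * (1 + m) + 0 := by
        rw [hgdef]; simp [Set.indicator_of_notMem hp]
      rw [this]; linarith
  have hint : ‖∫ p : ℝ × ℝ, f p ∂(σs n)‖ ≤ ∫ p, g p ∂(σs n) :=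
    norm_integral_le_of_norm_le hg_int (Filter.Eventually.of_forall hfg)
  have hgint : ∫ p, g p ∂(σs n)
      = y * (1 + m) * ((σs n) Set.univ).toReal + 2 * ((σs n) T).toReal := by
    rw [hgdef]
    rw [integral_add (integrable_const _) ((integrable_const (2:ℝ)).indicator hT)]
    rw [integral_const, integral_indicator_const _ hT]
    simp [smul_eq_mul, Measure.real]; ring
  have hIγ : ‖I * (γ n : ℂ) * (y : ℂ)‖ = |γ n| * y := by
    simp [norm_mul, Complex.norm_real, Real.norm_eq_abs, _root_.abs_of_nonneg (le_of_lt hy)]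
  have key : ‖I * (γ n : ℂ) * (y : ℂ) + ∫ p : ℝ × ℝ, f p ∂(σs n)‖
      ≤ |γ n| * y + (y * (1 + m) * ((σs n) Set.univ).toReal + 2 * ((σs n) T).toReal) := by
    calc ‖I * (γ n : ℂ) * (y : ℂ) + ∫ p : ℝ × ℝ, f p ∂(σs n)‖
        ≤ ‖I * (γ n : ℂ) * (y : ℂ)‖ + ‖∫ p : ℝ × ℝ, f p ∂(σs n)‖ := norm_add_le _ _
      _ ≤ |γ n| * y + (y * (1 + m) * ((σs n) Set.univ).toReal + 2 * ((σs n) T).toReal) := by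
          rw [hIγ]; exact add_le_add_right (hgint ▸ hint) _
  have b1 : |γ n| * y < ε / 3 := by
    have h1 : y * (3 * (C + 1)) < ε := (lt_div_iff₀ (by positivity)).mp hy2
    nlinarith [hC n, hy.le]
  have b2 : y * (1 + m) * ((σs n) Set.univ).toReal < ε / 3 := by
    have h := hM n
    have hmeas : (0:ℝ) ≤ ((σs n) Set.univ).toReal := ENNReal.toReal_nonneg
    have h1 : y * (3 * (1 + m) * (M + 1)) < ε := (lt_div_iff₀ (by positivity)).mp hy3
    nlinarith
  have b3 : 2 * ((σs n) T).toReal < ε / 3 := by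
    have := htail n
    have : ((σs n) T).toReal < ε / 6 := this
    linarith
  calc ‖I * (γ n : ℂ) * (y : ℂ) + ∫ p : ℝ × ℝ,
        ((-I * (y : ℂ)) ^ 2 - I * (y : ℂ) * (p.1 : ℂ)) / (1 + I * (y : ℂ) * (p.1 : ℂ)) ∂(σs n)‖
      = ‖I * (γ n : ℂ) * (y : ℂ) + ∫ p : ℝ × ℝ, f p ∂(σs n)‖ := rfl
    _ ≤ |γ n| * y + (y * (1 + m) * ((σs n) Set.univ).toReal + 2 * ((σs n) T).toReal) := key
    _ < ε / 3 + (ε / 3 + ε / 3) := by linarith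
    _ = ε := by ring
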